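/- Let E₁, E₂ be real finite-dimensional inner product spaces and 0 < μ_g ≤ L_{g,1}, L_{f,0}, L_{f,1}, L_{g,2} > 0, and let 0 < β ≤ 1/L_{g,1}. For t ∈ {t−1, t} suppose given maps H_{t−1}, H_t : E₁ × E₂ → (bounded linear operators E₂ → E₂) and b_{t−1}, b_t : E₁ × E₂ → E₂ such that: each H_s(z) is self-adjoint with ⟨H_s(z)v, v⟩ ≥ μ_g‖v‖² and ‖H_s(z)‖ ≤ L_{g,1}; z ↦ H_s(z) is L_{g,2}-Lipschitz and z ↦ b_s(z) is L_{f,1}-Lipschitz (on E₁ × E₂ with the ℓ² norm); and ‖b_s(z)‖ ≤ L_{f,0} everywhere. Suppose moreover that ‖H_{t−1}(z) − H_t(z)‖ ≤ Δ^H and ‖b_{t−1}(z) − b_t(z)‖ ≤ Δ^b for all z. Let V := {v ∈ E₂ : ‖v‖ ≤ L_{f,0}/μ_g} with metric projection P_V, let x_{t−1}, x_t ∈ E₁ and y_t, y_{t+1} ∈ E₂, set w*_{t−1} := H_{t−1}(x_{t−1}, y_t)⁻¹ b_{t−1}(x_{t−1}, y_t) and w*_t := H_t(x_t, y_{t+1})⁻¹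 b_t(x_t, y_{t+1}), and let v_t ∈ V and v_{t+1} := P_V(v_t − β(H_t(x_t, y_{t+1}) v_t − b_t(x_t, y_{t+1}))). Then ‖v_{t+1} − w*_t‖² ≤ (1 − βμ_g/2)‖v_t − w*_{t−1}‖² + (4L_{f,1}²/μ_g² + 4L_{f,0}²L_{g,2}²/μ_g⁴)(1 − βμ_g)(1 + 2/(βμ_g))(‖x_{t−1} − x_t‖² + ‖y_t − y_{t+1}‖²) + (4L_{f,0}²/μ_g⁴)(1 − βμ_g)(1 + 2/(βμ_g))(Δ^H)² + (4/μ_g²)(1 − βμ_g)(1 + 2/(βμ_g))(Δ^b)². -/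

import Mathlib

set_option maxHeartbeats 1000000
open scoped RealInnerProductSpace

/-- Cauchy–Schwarz for the PSD bilinear form `(u,w) ↦ ⟪A u, w⟫`. -/
lemma psd_cs {E : Type*} [NormedAddCommGroup E] [InnerProductSpace ℝ E]
    (A : E →L[ℝ] E) (hsa : ∀ v w : E, ⟪A v, w⟫ = ⟪v, A w⟫)
    (hpos : ∀ v : E, 0 ≤ ⟪A v, v⟫) (u w : E) :
    ⟪A u, w⟫ ^ 2 ≤ ⟪A u, u⟫ * ⟪A w, w⟫ := by
  have hexp : ∀ t : ℝ, 0 ≤ ⟪A u, u⟫ + 2 * t * ⟪A u, w⟫ + t ^ 2 * ⟪A w, w⟫ := by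
    intro t
    have h := hpos (u + t • w)
    have he : ⟪A (u + t • w), u + t • w⟫
        = ⟪A u, u⟫ + 2 * t * ⟪A u, w⟫ + t ^ 2 * ⟪A w, w⟫ := by
      have hwu : ⟪A w, u⟫ = ⟪A u, w⟫ := by
        rw [hsa w u, real_inner_comm]
      rw [map_add, map_smul]
      simp only [inner_add_left, inner_add_right, real_inner_smul_left,
        real_inner_smul_right, hwu]
      ring
    rw [he] at h
    linarith
  rcases eq_or_lt_of_le (hpos w) with h0 | h0
  · have hc : ⟪A u, w⟫ = 0 := by
      by_contra hc
      have h := hexp (-(⟪A u, u⟫ + 1) / (2 * ⟪A u, w⟫))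
      have ht : 2 * (-(⟪A u, u⟫ + 1) / (2 * ⟪A u, w⟫)) * ⟪A u, w⟫
          = -(⟪A u, u⟫ + 1) := by field_simp
      rw [← h0] at h
      rw [ht] at h
      simp at h
      linarith
    rw [hc, ← h0]
    simp
  · have h := hexp (-(⟪A u, w⟫) / ⟪A w, w⟫)
    have hne : ⟪A w, w⟫ ≠ 0 := h0.ne'
    have hkey : 2 * (-(⟪A u, w⟫) / ⟪A w, w⟫) * ⟪A u, w⟫
        + (-(⟪A u, w⟫) / ⟪A w, w⟫) ^ 2 * ⟪A w, w⟫
        = -(⟪A u, w⟫ ^ 2 / ⟪A w, w⟫) := by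
      field_simp
      ring
    have h2 : 0 ≤ ⟪A u, u⟫ - ⟪A u, w⟫ ^ 2 / ⟪A w, w⟫ := by linarith [hkey, h]
    have h3 : ⟪A u, w⟫ ^ 2 / ⟪A w, w⟫ ≤ ⟪A u, u⟫ := by linarith
    calc ⟪A u, w⟫ ^ 2 = ⟪A u, w⟫ ^ 2 / ⟪A w, w⟫ * ⟪A w, w⟫ := by field_simp
    _ ≤ ⟪A u, u⟫ * ⟪A w, w⟫ := by
        exact mul_le_mul_of_nonneg_right h3 h0.le

/-- Contraction of one gradient step for a self-adjoint coercive operator. -/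
lemma step_contraction {E : Type*} [NormedAddCommGroup E] [InnerProductSpace ℝ E]
    (A : E →L[ℝ] E) (μ L β : ℝ) (hμ : 0 < μ) (hβ : 0 < β) (hβL : β * L ≤ 1)
    (hsa : ∀ v w : E, ⟪A v, w⟫ = ⟪v, A w⟫)
    (hcoer : ∀ v : E, μ * ‖v‖ ^ 2 ≤ ⟪A v, v⟫) (hbd : ‖A‖ ≤ L) (u : E) :
    ‖u - β • A u‖ ^ 2 ≤ (1 - β * μ) * ‖u‖ ^ 2 := by
  have hpos : ∀ v : E, 0 ≤ ⟪A v, v⟫ := fun v =>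
    le_trans (by positivity) (hcoer v)
  have hL0 : 0 ≤ L := le_trans (norm_nonneg _) hbd
  have hAu2 : ‖A u‖ ^ 2 ≤ L * ⟪A u, u⟫ := by
    rcases eq_or_ne (‖A u‖) 0 with h0 | h0
    · rw [h0]
      simpa using mul_nonneg hL0 (hpos u)
    · have hcs := psd_cs A hsa hpos u (A u)
      have hself : ⟪A u, A u⟫ = ‖A u‖ ^ 2 := real_inner_self_eq_norm_sq _
      have h1 : ⟪A (A u), A u⟫ ≤ L * ‖A u‖ ^ 2 := by
        calc ⟪A (A u), A u⟫ ≤ ‖A (A u)‖ * ‖A u‖ := real_inner_le_norm _ _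
        _ ≤ ‖A‖ * ‖A u‖ * ‖A u‖ := by
            have := A.le_opNorm (A u)
            nlinarith [norm_nonneg (A u)]
        _ ≤ L * ‖A u‖ ^ 2 := by nlinarith [norm_nonneg (A u), sq_nonneg (‖A u‖)]
      rw [hself] at hcs
      have hAupos : 0 < ‖A u‖ ^ 2 := by positivity
      nlinarith [hpos u, mul_le_mul_of_nonneg_left h1 (hpos u)]
  have hexp : ‖u - β • A u‖ ^ 2 = ‖u‖ ^ 2 - 2 * β * ⟪A u, u⟫ + β ^ 2 * ‖A u‖ ^ 2 := by
    rw [norm_sub_sq_real, real_inner_smul_right, norm_smul]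
    rw [real_inner_comm u (A u)]
    have : (‖β‖ * ‖A u‖) ^ 2 = β ^ 2 * ‖A u‖ ^ 2 := by
      rw [Real.norm_eq_abs, mul_pow, sq_abs]
    rw [this]
    ring
  have h2 : β ^ 2 * ‖A u‖ ^ 2 ≤ β ^ 2 * (L * ⟪A u, u⟫) :=
    mul_le_mul_of_nonneg_left hAu2 (sq_nonneg β)
  have h3 : β * (β * L) * ⟪A u, u⟫ ≤ β * 1 * ⟪A u, u⟫ := by
    apply mul_le_mul_of_nonneg_right _ (hpos u)
    apply mul_le_mul_of_nonneg_left hβL hβ.le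
  have h4 := mul_le_mul_of_nonneg_left (hcoer u) hβ.le
  nlinarith

/-- Projection onto the ball is nonexpansive toward points of the ball. -/
lemma proj_nonexp {E : Type*} [NormedAddCommGroup E] [InnerProductSpace ℝ E]
    (R : ℝ) (projV : E → E)
    (hproj : ∀ z : E, ‖projV z‖ ≤ R ∧ ∀ u : E, ‖u‖ ≤ R → ‖z - projV z‖ ≤ ‖z - u‖)
    (z u : E) (hu : ‖u‖ ≤ R) : ‖projV z - u‖ ≤ ‖z - u‖ := by
  set p := projV z with hp
  have hvar : ⟪z - p, u - p⟫ ≤ 0 := by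
    set c := ⟪z - p, u - p⟫ with hc
    set m := ‖u - p‖ ^ 2 with hm
    have hkey : ∀ t : ℝ, 0 < t → t ≤ 1 → 2 * c ≤ t * m := by
      intro t ht0 ht1
      have hub : ‖p + t • (u - p)‖ ≤ R := by
        have heq : p + t • (u - p) = (1 - t) • p + t • u := by module
        rw [heq]
        calc ‖(1 - t) • p + t • u‖ ≤ ‖(1 - t) • p‖ + ‖t • u‖ := norm_add_le _ _
        _ = (1 - t) * ‖p‖ + t * ‖u‖ := by
            rw [norm_smul, norm_smul, Real.norm_eq_abs, Real.norm_eq_abs,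
              abs_of_nonneg (by linarith), abs_of_nonneg ht0.le]
        _ ≤ (1 - t) * R + t * R := by
            have h1 := (hproj z).1
            apply add_le_add
            · exact mul_le_mul_of_nonneg_left h1 (by linarith)
            · exact mul_le_mul_of_nonneg_left hu ht0.le
        _ = R := by ring
      have h := (hproj z).2 _ hub
      have heq2 : z - (p + t • (u - p)) = (z - p) - t • (u - p) := by module
      rw [heq2] at h
      have hsq : ‖z - p‖ ^ 2 ≤ ‖(z - p) - t • (u - p)‖ ^ 2 := by
        have := norm_nonneg (z - p)
        nlinarith [h, norm_nonneg ((z - p) - t • (u - p))]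
      have hexp : ‖(z - p) - t • (u - p)‖ ^ 2
          = ‖z - p‖ ^ 2 - 2 * t * c + t ^ 2 * m := by
        rw [norm_sub_sq_real, real_inner_smul_right, norm_smul]
        have : (‖t‖ * ‖u - p‖) ^ 2 = t ^ 2 * m := by
          rw [Real.norm_eq_abs, mul_pow, sq_abs, hm]
        rw [this]
        ring
      rw [hexp] at hsq
      have h5 : 2 * t * c ≤ t ^ 2 * m := by linarith
      nlinarith [h5, ht0, sq_nonneg t]
    by_contra hcpos
    push_neg at hcpos
    have hm0 : 0 ≤ m := by positivity
    rcases eq_or_lt_of_le hm0 with hmz | hmp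
    · have := hkey 1 one_pos le_rfl
      rw [← hmz] at this
      linarith
    · have ht0 : 0 < min 1 (c / m) := lt_min one_pos (div_pos hcpos hmp)
      have := hkey _ ht0 (min_le_left _ _)
      have h6 : min 1 (c / m) * m ≤ (c / m) * m :=
        mul_le_mul_of_nonneg_right (min_le_right _ _) hm0
      have h7 : (c / m) * m = c := by field_simp
      linarith
  have hid : ‖z - u‖ ^ 2 = ‖z - p‖ ^ 2 + 2 * ⟪z - p, p - u⟫ + ‖p - u‖ ^ 2 := by
    have : z - u = (z - p) + (p - u) := by module
    rw [this, norm_add_sq_real]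
  have h8 : ⟪z - p, p - u⟫ = -⟪z - p, u - p⟫ := by
    rw [← inner_neg_right]
    congr 1
    module
  have h9 : ‖p - u‖ ^ 2 ≤ ‖z - u‖ ^ 2 := by
    rw [hid, h8]
    nlinarith [sq_nonneg (‖z - p‖)]
  have := norm_nonneg (p - u)
  nlinarith [norm_nonneg (z - u)]
/-- Elementary: square of a four-term sum. -/
lemma four_term_sq (p q r s : ℝ) :
    (p + q + r + s) ^ 2 ≤ 4 * (p ^ 2 + q ^ 2 + r ^ 2 + s ^ 2) := by
  nlinarith [sq_nonneg (p - q), sq_nonneg (p - r), sq_nonneg (p - s),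
    sq_nonneg (q - r), sq_nonneg (q - s), sq_nonneg (r - s)]

theorem single_loop_v_tracking {E₁ E₂ : Type*}
    [NormedAddCommGroup E₁] [InnerProductSpace ℝ E₁] [FiniteDimensional ℝ E₁]
    [NormedAddCommGroup E₂] [InnerProductSpace ℝ E₂] [FiniteDimensional ℝ E₂]
    (μ_g L_g1 L_f0 L_f1 L_g2 : ℝ)
    (hμ : 0 < μ_g) (hμL : μ_g ≤ L_g1) (hLf0 : 0 < L_f0) (hLf1 : 0 < L_f1) (hLg2 : 0 < L_g2)
    (β : ℝ) (hβ : 0 < β) (hβ' : β ≤ 1 / L_g1)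
    (H : Fin 2 → E₁ → E₂ → (E₂ →L[ℝ] E₂)) (b : Fin 2 → E₁ → E₂ → E₂)
    (hHsa : ∀ (s : Fin 2) (x : E₁) (y : E₂) (v w : E₂), ⟪H s x y v, w⟫ = ⟪v, H s x y w⟫)
    (hHcoer : ∀ (s : Fin 2) (x : E₁) (y : E₂) (v : E₂), μ_g * ‖v‖ ^ 2 ≤ ⟪H s x y v, v⟫)
    (hHbd : ∀ (s : Fin 2) (x : E₁) (y : E₂), ‖H s x y‖ ≤ L_g1)
    (hHlip : ∀ (s : Fin 2) (x x' : E₁) (y y' : E₂),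
      ‖H s x y - H s x' y'‖ ^ 2 ≤ L_g2 ^ 2 * (‖x - x'‖ ^ 2 + ‖y - y'‖ ^ 2))
    (hblip : ∀ (s : Fin 2) (x x' : E₁) (y y' : E₂),
      ‖b s x y - b s x' y'‖ ^ 2 ≤ L_f1 ^ 2 * (‖x - x'‖ ^ 2 + ‖y - y'‖ ^ 2))
    (hbbd : ∀ (s : Fin 2) (x : E₁) (y : E₂), ‖b s x y‖ ≤ L_f0)
    (ΔH Δb : ℝ)
    (hΔH : ∀ (x : E₁) (y : E₂), ‖H 0 x y - H 1 x y‖ ≤ ΔH)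
    (hΔb : ∀ (x : E₁) (y : E₂), ‖b 0 x y - b 1 x y‖ ≤ Δb)
    (projV : E₂ → E₂)
    (hprojV : ∀ z : E₂, ‖projV z‖ ≤ L_f0 / μ_g ∧
      ∀ u : E₂, ‖u‖ ≤ L_f0 / μ_g → ‖z - projV z‖ ≤ ‖z - u‖)
    (xprev xcur : E₁) (ycur ynext : E₂)
    (wprev wcur : E₂)
    (hwprev : H 0 xprev ycur wprev = b 0 xprev ycur)
    (hwcur : H 1 xcur ynext wcur = b 1 xcur ynext)
    (vt : E₂) (hvt : ‖vt‖ ≤ L_f0 / μ_g) :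
    ‖projV (vt - β • (H 1 xcur ynext vt - b 1 xcur ynext)) - wcur‖ ^ 2 ≤
      (1 - β * μ_g / 2) * ‖vt - wprev‖ ^ 2 +
      (4 * L_f1 ^ 2 / μ_g ^ 2 + 4 * L_f0 ^ 2 * L_g2 ^ 2 / μ_g ^ 4) *
        (1 - β * μ_g) * (1 + 2 / (β * μ_g)) *
        (‖xprev - xcur‖ ^ 2 + ‖ycur - ynext‖ ^ 2) +
      (4 * L_f0 ^ 2 / μ_g ^ 4) * (1 - β * μ_g) * (1 + 2 / (β * μ_g)) * ΔH ^ 2 +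
      (4 / μ_g ^ 2) * (1 - β * μ_g) * (1 + 2 / (β * μ_g)) * Δb ^ 2 := by
  set A := H 1 xcur ynext with hAdef
  set a := b 1 xcur ynext with hadef
  have hLg1 : 0 < L_g1 := lt_of_lt_of_le hμ hμL
  have hβL : β * L_g1 ≤ 1 := (le_div_iff₀ hLg1).mp hβ'
  have hΔH0 : 0 ≤ ΔH := le_trans (norm_nonneg _) (hΔH xcur ynext)
  have hΔb0 : 0 ≤ Δb := le_trans (norm_nonneg _) (hΔb xcur ynext)
  -- norm bounds on the solutions
  have hwnorm : ∀ (s : Fin 2) (x : E₁) (y : E₂) (w : E₂),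
      H s x y w = b s x y → ‖w‖ ≤ L_f0 / μ_g := by
    intro s x y w hw
    have h1 : μ_g * ‖w‖ ^ 2 ≤ ⟪H s x y w, w⟫ := hHcoer s x y w
    rw [hw] at h1
    have h2 : ⟪b s x y, w⟫ ≤ L_f0 * ‖w‖ :=
      le_trans (real_inner_le_norm _ _)
        (mul_le_mul_of_nonneg_right (hbbd s x y) (norm_nonneg w))
    rcases eq_or_lt_of_le (norm_nonneg w) with h0 | h0
    · rw [← h0]; positivity
    · rw [le_div_iff₀ hμ]
      nlinarith
  have hwc : ‖wcur‖ ≤ L_f0 / μ_g := hwnorm 1 xcur ynext wcur hwcur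
  have hwp : ‖wprev‖ ≤ L_f0 / μ_g := hwnorm 0 xprev ycur wprev hwprev
  -- projection is nonexpansive toward wcur
  have h1 : ‖projV (vt - β • (A vt - a)) - wcur‖ ≤ ‖(vt - β • (A vt - a)) - wcur‖ :=
    proj_nonexp (L_f0 / μ_g) projV hprojV _ wcur hwc
  have hrw : (vt - β • (A vt - a)) - wcur = (vt - wcur) - β • (A (vt - wcur)) := by
    rw [map_sub, hwcur]
    module
  have h2 := step_contraction A μ_g L_g1 β hμ hβ hβL (hHsa 1 xcur ynext)
    (hHcoer 1 xcur ynext) (hHbd 1 xcur ynext) (vt - wcur)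
  have h1sq : ‖projV (vt - β • (A vt - a)) - wcur‖ ^ 2 ≤ (1 - β * μ_g) * ‖vt - wcur‖ ^ 2 := by
    calc ‖projV (vt - β • (A vt - a)) - wcur‖ ^ 2
        ≤ ‖(vt - β • (A vt - a)) - wcur‖ ^ 2 :=
          pow_le_pow_left₀ (norm_nonneg _) h1 2
    _ = ‖(vt - wcur) - β • (A (vt - wcur))‖ ^ 2 := by rw [hrw]
    _ ≤ (1 - β * μ_g) * ‖vt - wcur‖ ^ 2 := h2
  -- drift bound on ‖wprev - wcur‖
  set S := ‖xprev - xcur‖ ^ 2 + ‖ycur - ynext‖ ^ 2 with hSdef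
  have hS0 : 0 ≤ S := by positivity
  set sS := Real.sqrt S with hsSdef
  have hsS : sS ^ 2 = S := Real.sq_sqrt hS0
  have hsS0 : 0 ≤ sS := Real.sqrt_nonneg _
  have sq_le_to_le : ∀ x y : ℝ, 0 ≤ x → 0 ≤ y → x ^ 2 ≤ y ^ 2 → x ≤ y := by
    intro x y hx hy hxy; nlinarith
  have hHlipn : ‖H 0 xprev ycur - H 0 xcur ynext‖ ≤ L_g2 * sS := by
    apply sq_le_to_le _ _ (norm_nonneg _) (by positivity)
    calc ‖H 0 xprev ycur - H 0 xcur ynext‖ ^ 2 ≤ L_g2 ^ 2 * S := hHlip 0 xprev xcur ycur ynext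
    _ = (L_g2 * sS) ^ 2 := by rw [mul_pow, hsS]
  have hblipn : ‖b 0 xprev ycur - b 0 xcur ynext‖ ≤ L_f1 * sS := by
    apply sq_le_to_le _ _ (norm_nonneg _) (by positivity)
    calc ‖b 0 xprev ycur - b 0 xcur ynext‖ ^ 2 ≤ L_f1 ^ 2 * S := hblip 0 xprev xcur ycur ynext
    _ = (L_f1 * sS) ^ 2 := by rw [mul_pow, hsS]
  have hH01 : ‖H 0 xprev ycur - A‖ ≤ L_g2 * sS + ΔH := by
    have htr : H 0 xprev ycur - A = (H 0 xprev ycur - H 0 xcur ynext) + (H 0 xcur ynext - A) := by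
      abel
    calc ‖H 0 xprev ycur - A‖
        ≤ ‖H 0 xprev ycur - H 0 xcur ynext‖ + ‖H 0 xcur ynext - A‖ := by
          rw [htr]; exact norm_add_le _ _
    _ ≤ L_g2 * sS + ΔH := add_le_add hHlipn (hΔH xcur ynext)
  have hb01 : ‖b 0 xprev ycur - a‖ ≤ L_f1 * sS + Δb := by
    have htr : b 0 xprev ycur - a = (b 0 xprev ycur - b 0 xcur ynext) + (b 0 xcur ynext - a) := by
      abel
    calc ‖b 0 xprev ycur - a‖
        ≤ ‖b 0 xprev ycur - b 0 xcur ynext‖ + ‖b 0 xcur ynext - a‖ := by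
          rw [htr]; exact norm_add_le _ _
    _ ≤ L_f1 * sS + Δb := add_le_add hblipn (hΔb xcur ynext)
  have hcoernA : μ_g * ‖wprev - wcur‖ ≤ ‖A (wprev - wcur)‖ := by
    have hh1 := hHcoer 1 xcur ynext (wprev - wcur)
    have hh2 : ⟪A (wprev - wcur), wprev - wcur⟫ ≤ ‖A (wprev - wcur)‖ * ‖wprev - wcur‖ :=
      real_inner_le_norm _ _
    rcases eq_or_lt_of_le (norm_nonneg (wprev - wcur)) with h0 | h0
    · rw [← h0]; simp [norm_nonneg]
    · have h4 : μ_g * ‖wprev - wcur‖ * ‖wprev - wcur‖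
          ≤ ‖A (wprev - wcur)‖ * ‖wprev - wcur‖ := by
        calc μ_g * ‖wprev - wcur‖ * ‖wprev - wcur‖ = μ_g * ‖wprev - wcur‖ ^ 2 := by ring
        _ ≤ ⟪A (wprev - wcur), wprev - wcur⟫ := hh1
        _ ≤ ‖A (wprev - wcur)‖ * ‖wprev - wcur‖ := hh2
      exact le_of_mul_le_mul_right h4 h0
  have hdecomp : A (wprev - wcur) = (A - H 0 xprev ycur) wprev + (b 0 xprev ycur - a) := by
    rw [map_sub, hwcur, ContinuousLinearMap.sub_apply, hwprev]
    abel
  have hAdiff : ‖A (wprev - wcur)‖ ≤ (L_g2 * sS + ΔH) * (L_f0 / μ_g) + (L_f1 * sS + Δb) := by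
    rw [hdecomp]
    calc ‖(A - H 0 xprev ycur) wprev + (b 0 xprev ycur - a)‖
        ≤ ‖(A - H 0 xprev ycur) wprev‖ + ‖b 0 xprev ycur - a‖ := norm_add_le _ _
    _ ≤ ‖A - H 0 xprev ycur‖ * ‖wprev‖ + (L_f1 * sS + Δb) :=
        add_le_add ((A - H 0 xprev ycur).le_opNorm wprev) hb01
    _ ≤ (L_g2 * sS + ΔH) * (L_f0 / μ_g) + (L_f1 * sS + Δb) := by
        apply add_le_add_left
        apply mul_le_mul _ hwp (norm_nonneg _) (by positivity)
        rw [norm_sub_rev]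
        exact hH01
  have hD : ‖wprev - wcur‖ ≤ ((L_g2 * sS + ΔH) * (L_f0 / μ_g) + (L_f1 * sS + Δb)) / μ_g := by
    rw [le_div_iff₀ hμ]
    nlinarith [hcoernA, hAdiff]
  have hD2 : ‖wprev - wcur‖ ^ 2
      ≤ 4 * (L_f1 ^ 2 * S / μ_g ^ 2 + L_f0 ^ 2 * L_g2 ^ 2 * S / μ_g ^ 4
        + L_f0 ^ 2 * ΔH ^ 2 / μ_g ^ 4 + Δb ^ 2 / μ_g ^ 2) := by
    have hsum : ‖wprev - wcur‖ ≤ L_f1 * sS / μ_g + Δb / μ_g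
        + L_f0 * L_g2 * sS / μ_g ^ 2 + L_f0 * ΔH / μ_g ^ 2 := by
      calc ‖wprev - wcur‖ ≤ ((L_g2 * sS + ΔH) * (L_f0 / μ_g) + (L_f1 * sS + Δb)) / μ_g := hD
      _ = L_f1 * sS / μ_g + Δb / μ_g + L_f0 * L_g2 * sS / μ_g ^ 2 + L_f0 * ΔH / μ_g ^ 2 := by
          field_simp
          ring
    have hDnn := norm_nonneg (wprev - wcur)
    set p := L_f1 * sS / μ_g with hp
    set q := Δb / μ_g with hq
    set r := L_f0 * L_g2 * sS / μ_g ^ 2 with hr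
    set s' := L_f0 * ΔH / μ_g ^ 2 with hs'
    have h4 : ‖wprev - wcur‖ ^ 2 ≤ 4 * (p ^ 2 + q ^ 2 + r ^ 2 + s' ^ 2) := by
      have hsq2 : ‖wprev - wcur‖ ^ 2 ≤ (p + q + r + s') ^ 2 :=
        pow_le_pow_left₀ hDnn hsum 2
      linarith [four_term_sq p q r s', hsq2]
    calc ‖wprev - wcur‖ ^ 2 ≤ 4 * (p ^ 2 + q ^ 2 + r ^ 2 + s' ^ 2) := h4
    _ = 4 * (L_f1 ^ 2 * S / μ_g ^ 2 + L_f0 ^ 2 * L_g2 ^ 2 * S / μ_g ^ 4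
        + L_f0 ^ 2 * ΔH ^ 2 / μ_g ^ 4 + Δb ^ 2 / μ_g ^ 2) := by
        rw [hp, hq, hr, hs', ← hsS]
        field_simp
        ring
  -- peeling inequality
  have hc0 : 0 < β * μ_g := mul_pos hβ hμ
  have hc1 : β * μ_g ≤ 1 := le_trans (mul_le_mul_of_nonneg_left hμL hβ.le) hβL
  have hab : 2 * ‖vt - wprev‖ * ‖wprev - wcur‖
      ≤ (β * μ_g / 2) * ‖vt - wprev‖ ^ 2 + (2 / (β * μ_g)) * ‖wprev - wcur‖ ^ 2 := by
    have key : (β * μ_g / 2) * ‖vt - wprev‖ ^ 2 + (2 / (β * μ_g)) * ‖wprev - wcur‖ ^ 2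
        - 2 * ‖vt - wprev‖ * ‖wprev - wcur‖
        = (β * μ_g * ‖vt - wprev‖ - 2 * ‖wprev - wcur‖) ^ 2 / (2 * (β * μ_g)) := by
      field_simp
      ring
    have hnn : 0 ≤ (β * μ_g * ‖vt - wprev‖ - 2 * ‖wprev - wcur‖) ^ 2 / (2 * (β * μ_g)) := by
      positivity
    linarith [key, hnn]
  have htri : ‖vt - wcur‖ ≤ ‖vt - wprev‖ + ‖wprev - wcur‖ := by
    have heq : vt - wcur = (vt - wprev) + (wprev - wcur) := by abel
    rw [heq]
    exact norm_add_le _ _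
  have h3 : ‖vt - wcur‖ ^ 2 ≤ (1 + β * μ_g / 2) * ‖vt - wprev‖ ^ 2
      + (1 + 2 / (β * μ_g)) * ‖wprev - wcur‖ ^ 2 := by
    have hsq3 : ‖vt - wcur‖ ^ 2 ≤ (‖vt - wprev‖ + ‖wprev - wcur‖) ^ 2 :=
      pow_le_pow_left₀ (norm_nonneg _) htri 2
    nlinarith [hsq3, hab]
  -- combine everything
  have hc1' : 0 ≤ 1 - β * μ_g := by linarith
  have hK : 0 ≤ (1 - β * μ_g) * (1 + 2 / (β * μ_g)) := by positivity
  have hA2 : (1 - β * μ_g) * ‖vt - wcur‖ ^ 2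
      ≤ (1 - β * μ_g) * ((1 + β * μ_g / 2) * ‖vt - wprev‖ ^ 2
        + (1 + 2 / (β * μ_g)) * ‖wprev - wcur‖ ^ 2) :=
    mul_le_mul_of_nonneg_left h3 hc1'
  have hA3 : (1 - β * μ_g) * (1 + β * μ_g / 2) * ‖vt - wprev‖ ^ 2
      ≤ (1 - β * μ_g / 2) * ‖vt - wprev‖ ^ 2 := by
    apply mul_le_mul_of_nonneg_right _ (sq_nonneg _)
    nlinarith [hc0, hc1]
  have hA4 : (1 - β * μ_g) * (1 + 2 / (β * μ_g)) * ‖wprev - wcur‖ ^ 2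
      ≤ (1 - β * μ_g) * (1 + 2 / (β * μ_g)) * (4 * (L_f1 ^ 2 * S / μ_g ^ 2
        + L_f0 ^ 2 * L_g2 ^ 2 * S / μ_g ^ 4 + L_f0 ^ 2 * ΔH ^ 2 / μ_g ^ 4
        + Δb ^ 2 / μ_g ^ 2)) :=
    mul_le_mul_of_nonneg_left hD2 hK
  have hring : (1 - β * μ_g) * (1 + 2 / (β * μ_g)) * (4 * (L_f1 ^ 2 * S / μ_g ^ 2
        + L_f0 ^ 2 * L_g2 ^ 2 * S / μ_g ^ 4 + L_f0 ^ 2 * ΔH ^ 2 / μ_g ^ 4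
        + Δb ^ 2 / μ_g ^ 2))
      = (4 * L_f1 ^ 2 / μ_g ^ 2 + 4 * L_f0 ^ 2 * L_g2 ^ 2 / μ_g ^ 4)
          * (1 - β * μ_g) * (1 + 2 / (β * μ_g)) * S
        + (4 * L_f0 ^ 2 / μ_g ^ 4) * (1 - β * μ_g) * (1 + 2 / (β * μ_g)) * ΔH ^ 2
        + (4 / μ_g ^ 2) * (1 - β * μ_g) * (1 + 2 / (β * μ_g)) * Δb ^ 2 := by
    ring
  linarith [h1sq, hA2, hA3, hA4, hring]
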